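/- arXiv:1805.03789 — 2 statements merged into one kernel-verified Lean document; each statement's English description precedes it below -/
import Mathlib

section
/- For a skew polynomial F = Σ_i F_i x^i over F_{q^m} with automorphism σ, define the linearized operator F^{D_a}(β) = Σ_i F_i σ^i(β) N_i(a), where N_i(a) = σ^{i−1}(a)···σ(a)a. Then for all nonzero β ∈ F_{q^m}, the skew evaluation satisfies F(σ(β)β^{−1} a) = F^{D_a}(β) β^{−1}. -/
open Finset

/-- The `i`-th truncated norm `N_i(a) = σ^{i−1}(a)⋯σ(a)·a`. -/
def skewNorm {K : Type*} [Field K] (σ : K ≃+* K) (i : ℕ) (a : K) : K :=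
  ∏ j ∈ Finset.range i, (σ ^ j) a

/-- Evaluation of a skew polynomial `F ∈ K[x;σ]` (encoded by its coefficients
`F : ℕ →₀ K`) at `a`: the remainder of right division of `F` by `x − a`, given by
the closed formula `F(a) = Σᵢ Fᵢ · N_i(a)`. -/
noncomputable def skewEval {K : Type*} [Field K] (σ : K ≃+* K) (F : ℕ →₀ K) (a : K) : K :=
  F.sum fun i c => c * skewNorm σ i a

/-- Multiplication in the skew polynomial ring `K[x;σ]`, where `x·a = σ(a)·x`. -/
noncomputable def skewMul {K : Type*} [Field K] (σ : K ≃+* K) (U V : ℕ →₀ K) : ℕ →₀ K :=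
  U.sum fun i a => V.sum fun j b => Finsupp.single (i + j) (a * (σ ^ i) b)

/-- The linearized operator `F^{D_a}` associated with a skew polynomial `F`:
`F^{D_a}(β) = Σᵢ Fᵢ · σⁱ(β) · N_i(a)`. -/
noncomputable def linOpEval {K : Type*} [Field K] (σ : K ≃+* K) (F : ℕ →₀ K) (a β : K) : K :=
  F.sum fun i c => c * (σ ^ i) β * skewNorm σ i a

lemma skewNorm_conj {K : Type*} [Field K] (σ : K ≃+* K) (i : ℕ) (a β : K) (hβ : β ≠ 0) :
    skewNorm σ i (σ β * β⁻¹ * a) = (σ ^ i) β * β⁻¹ * skewNorm σ i a := by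
  induction i with
  | zero =>
      simp only [skewNorm, Finset.range_zero, Finset.prod_empty]
      rw [show ((σ ^ 0) β) = β from rfl, mul_inv_cancel₀ hβ, mul_one]
  | succ n ih =>
      have hσ : ((σ ^ n) β : K) ≠ 0 := fun h => hβ ((σ ^ n).injective (by simp [h]))
      simp only [skewNorm, Finset.prod_range_succ] at ih ⊢
      rw [ih]
      have h2 : (σ ^ (n+1)) β = (σ ^ n) (σ β) := by
        rw [pow_succ]; rfl
      simp only [map_mul, h2]
      rw [map_inv₀]
      field_simp

/-- For all nonzero `β`, the skew evaluation satisfies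
`F(σ(β)β⁻¹·a) = F^{D_a}(β)·β⁻¹`. -/
theorem skewEval_conj_eq_linOpEval {K : Type*} [Field K] (σ : K ≃+* K) (F : ℕ →₀ K)
    (a β : K) (hβ : β ≠ 0) :
    skewEval σ F (σ β * β⁻¹ * a) = linOpEval σ F a β * β⁻¹ := by
  unfold skewEval linOpEval
  rw [Finsupp.sum_mul]
  apply Finsupp.sum_congr
  intro i _
  rw [skewNorm_conj σ i a β hβ]
  ring
end

section
/- Welch-Berlekamp key equation correctness: let B = {b_1,...,b_n} be a P-basis of a P-closed set Ω ⊆ F_{q^m}, k ≤ n, t = ⌊(n−k)/2⌋. Suppose F, R ∈ F_{q^m}[x;σ] with deg F < k, deg R < n, and wt_Ω(R − F) ≤ t. If L, Q ∈ F_{q^m}[x;σ] satisfy deg L ≤ t, deg Q ≤ t + k − 1, and (L·R)(b_i) = Q(b_i) for all i = 1,...,n (in the sense that Q(b_i)=0 when R(b_i)=0, and L(b_i^{r_i}) r_i = Q(b_i) when r_i = R(b_i) ≠ 0), then Q = L·F in F_{q^m}[x;σ]. -/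
open Finset

/-- Degree of a skew polynomial encoded as `ℕ →₀ K` (with `deg 0 = 0` by convention). -/
def skewDeg {K : Type*} [Field K] (F : ℕ →₀ K) : ℕ := F.support.sup id

/-- `F` is the (monic) minimal skew polynomial of the set `Ω`: it is nonzero, monic,
vanishes on `Ω`, and has minimal degree among nonzero skew polynomials vanishing on `Ω`. -/
def IsMinSkewPoly {K : Type*} [Field K] (σ : K ≃+* K) (Ω : Set K) (F : ℕ →₀ K) : Prop :=
  F ≠ 0 ∧ F (skewDeg F) = 1 ∧ (∀ b ∈ Ω, skewEval σ F b = 0) ∧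
    ∀ G : ℕ →₀ K, G ≠ 0 → (∀ b ∈ Ω, skewEval σ G b = 0) → skewDeg F ≤ skewDeg G

/-- `a` is P-independent from the set `T`: some skew polynomial vanishing on `T` does not
vanish at `a` (equivalently, `a` is not in the P-closure of `T`). -/
def PIndepFrom {K : Type*} [Field K] (σ : K ≃+* K) (a : K) (T : Set K) : Prop :=
  ∃ F : ℕ →₀ K, (∀ b ∈ T, skewEval σ F b = 0) ∧ skewEval σ F a ≠ 0

/-- A set is P-independent if each of its elements is P-independent from the rest. -/
def PIndep {K : Type*} [Field K] (σ : K ≃+* K) (S : Set K) : Prop :=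
  ∀ a ∈ S, PIndepFrom σ a (S \ {a})

section WBAux

variable {K : Type*} [Field K] (σ : K ≃+* K)

lemma pow_apply_add (i l : ℕ) (a : K) : (σ^(i+l)) a = (σ^i) ((σ^l) a) := by
  rw [pow_add]; rfl

lemma skewNorm_add (i j : ℕ) (a : K) :
    skewNorm σ (i + j) a = skewNorm σ i a * (σ ^ i) (skewNorm σ j a) := by
  unfold skewNorm
  rw [Finset.prod_range_add, map_prod]
  congr 1
  exact Finset.prod_congr rfl fun l _ => pow_apply_add σ i l a

lemma skewNorm_succ (i : ℕ) (a : K) :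
    skewNorm σ (i + 1) a = skewNorm σ i a * (σ ^ i) a := by
  unfold skewNorm; rw [Finset.prod_range_succ]

lemma skewEval_single (p : ℕ) (c : K) (a : K) :
    skewEval σ (Finsupp.single p c) a = c * skewNorm σ p a := by
  unfold skewEval
  rw [Finsupp.sum_single_index]; simp

lemma skewEval_zero (a : K) : skewEval σ 0 a = 0 := by
  unfold skewEval; simp

lemma skewEval_add (X Y : ℕ →₀ K) (a : K) :
    skewEval σ (X + Y) a = skewEval σ X a + skewEval σ Y a := by
  unfold skewEval
  exact Finsupp.sum_add_index (by simp) (by intros; ring)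

lemma skewEval_sub (X Y : ℕ →₀ K) (a : K) :
    skewEval σ (X - Y) a = skewEval σ X a - skewEval σ Y a := by
  unfold skewEval
  exact Finsupp.sum_sub_index (by intros; ring)

lemma skewEval_skewMul (U V : ℕ →₀ K) (a : K) :
    skewEval σ (skewMul σ U V) a
      = U.sum fun i c => c * skewNorm σ i a * (σ ^ i) (skewEval σ V a) := by
  unfold skewMul skewEval
  rw [Finsupp.sum_sum_index (by simp) (by intros; ring)]
  refine Finsupp.sum_congr fun i _ => ?_
  rw [Finsupp.sum_sum_index (by simp) (by intros; ring)]
  rw [map_finsuppSum]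
  rw [Finsupp.mul_sum]
  refine Finsupp.sum_congr fun j _ => ?_
  rw [Finsupp.sum_single_index (by simp), skewNorm_add, map_mul]
  ring

lemma skewEval_skewMul_zero (U V : ℕ →₀ K) (a : K) (h : skewEval σ V a = 0) :
    skewEval σ (skewMul σ U V) a = 0 := by
  rw [skewEval_skewMul, h]
  simp [Finsupp.sum]

lemma sigma_pow_ne_zero (i : ℕ) {v : K} (h : v ≠ 0) : (σ ^ i) v ≠ 0 := by
  intro h0
  exact h ((RingEquiv.injective (σ ^ i)) (by simpa using h0))

lemma skewEval_skewMul_ne_zero (U V : ℕ →₀ K) (a : K) (h : skewEval σ V a ≠ 0) :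
    skewEval σ (skewMul σ U V) a
      = skewEval σ U (σ (skewEval σ V a) * (skewEval σ V a)⁻¹ * a) * skewEval σ V a := by
  set v := skewEval σ V a with hv
  have hnorm : ∀ i, skewNorm σ i (σ v * v⁻¹ * a) = (σ ^ i) v * v⁻¹ * skewNorm σ i a := by
    intro i
    induction i with
    | zero =>
      have h0 : ∀ b : K, skewNorm σ 0 b = 1 := fun b => by simp [skewNorm]
      have h1 : (σ ^ 0) v = v := rfl
      rw [h0, h0, h1, mul_one, mul_inv_cancel₀ h]
    | succ i ih =>
      rw [skewNorm_succ, skewNorm_succ, ih, map_mul, map_mul, map_inv₀]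
      have h1 : (σ ^ i) (σ v) = (σ ^ (i+1)) v := by
        rw [pow_succ]; rfl
      have h2 : (σ ^ i) v ≠ 0 := sigma_pow_ne_zero σ i h
      rw [h1]
      field_simp [h1]
  rw [skewEval_skewMul]
  unfold skewEval
  rw [Finsupp.sum_mul]
  refine Finsupp.sum_congr fun i _ => ?_
  rw [hnorm i]
  have hvv : (V.sum fun i c => c * skewNorm σ i a) = v := rfl
  rw [hvv]
  field_simp

lemma skewMul_apply_eq_zero (U V : ℕ →₀ K) (l : ℕ)
    (h : ∀ i j, i + j = l → U i * (σ ^ i) (V j) = 0) :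
    (skewMul σ U V) l = 0 := by
  unfold skewMul
  rw [Finsupp.sum_apply]
  refine Finset.sum_eq_zero fun i _ => ?_
  show (V.sum fun j b => Finsupp.single (i + j) (U i * (σ ^ i) b)) l = 0
  rw [Finsupp.sum_apply]
  refine Finset.sum_eq_zero fun j _ => ?_
  show (Finsupp.single (i + j) (U i * (σ ^ i) (V j))) l = 0
  rw [Finsupp.single_apply]
  split_ifs with hij
  · exact h i j hij
  · rfl

lemma skewMul_single_apply (s : ℕ) (c : K) (M : ℕ →₀ K) (l : ℕ) :
    (skewMul σ (Finsupp.single s c) M) l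
      = if s ≤ l then c * (σ ^ s) (M (l - s)) else 0 := by
  classical
  unfold skewMul
  rw [Finsupp.sum_single_index (by simp)]
  rw [Finsupp.sum_apply, Finsupp.sum]
  simp only [Finsupp.single_apply]
  by_cases hs : s ≤ l
  · rw [if_pos hs]
    have hcong : ∀ j ∈ M.support,
        (if s + j = l then c * (σ ^ s) (M j) else 0)
          = (if l - s = j then c * (σ ^ s) (M j) else 0) := by
      intro j _
      congr 1
      exact propext ⟨fun h => by omega, fun h => by omega⟩
    rw [Finset.sum_congr rfl hcong, Finset.sum_ite_eq]
    split_ifs with hmem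
    · rfl
    · rw [Finsupp.notMem_support_iff.mp hmem, map_zero, mul_zero]
  · rw [if_neg hs]
    refine Finset.sum_eq_zero fun j _ => ?_
    rw [if_neg (by omega)]

lemma skewMul_add_left (U U' V : ℕ →₀ K) :
    skewMul σ (U + U') V = skewMul σ U V + skewMul σ U' V := by
  unfold skewMul
  refine Finsupp.sum_add_index (by simp) ?_
  intro i _ b₁ b₂
  rw [← Finsupp.sum_add]
  refine Finsupp.sum_congr fun j _ => ?_
  rw [← Finsupp.single_add]
  congr 1
  ring

lemma skewMul_zero_left (V : ℕ →₀ K) : skewMul σ 0 V = 0 := by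
  unfold skewMul
  exact Finsupp.sum_zero_index

lemma apply_eq_zero_of_skewDeg_lt (P : ℕ →₀ K) (j : ℕ) (h : skewDeg P < j) : P j = 0 := by
  by_contra h0
  have := Finset.le_sup (f := id) (Finsupp.mem_support_iff.2 h0)
  simp only [id] at this
  unfold skewDeg at h
  omega

lemma skewDeg_lt_of (P : ℕ →₀ K) (m : ℕ) (hne : P ≠ 0) (h : ∀ i, m ≤ i → P i = 0) :
    skewDeg P < m := by
  have hm : 0 < m := by
    rcases Nat.eq_zero_or_pos m with h0 | h0
    · exact absurd (Finsupp.ext fun i => h i (by omega)) hne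
    · exact h0
  unfold skewDeg
  refine (Finset.sup_lt_iff (by simpa using hm)).2 fun j hj => ?_
  simp only [id]
  by_contra hc
  exact (Finsupp.mem_support_iff.1 hj) (h j (by omega))

lemma skew_div (M : ℕ →₀ K) (d : ℕ) (hm : M d = 1) (htop : ∀ j, d < j → M j = 0) :
    ∀ m (P : ℕ →₀ K), (∀ i, m ≤ i → P i = 0) →
      ∃ C ρ : ℕ →₀ K, P = skewMul σ C M + ρ ∧ ∀ j, d ≤ j → ρ j = 0 := by
  intro m
  induction m with
  | zero =>
    intro P hP
    refine ⟨0, 0, ?_, fun j _ => rfl⟩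
    rw [skewMul_zero_left, add_zero]
    exact Finsupp.ext fun i => hP i (by omega)
  | succ m ih =>
    intro P hP
    by_cases hmd : m < d
    · exact ⟨0, P, by rw [skewMul_zero_left, zero_add], fun j hj => hP j (by omega)⟩
    · set s := m - d with hs
      set c := P m with hc
      set X := skewMul σ (Finsupp.single s c) M with hX
      have h1 : ∀ i, m ≤ i → (P - X) i = 0 := by
        intro i hi
        rw [Finsupp.sub_apply, hX, skewMul_single_apply]
        rcases eq_or_lt_of_le hi with hlt | hlt
        · rw [if_pos (by omega)]
          have : i - s = d := by omega
          rw [this, hm, map_one, mul_one, ← hlt, ← hc, sub_self]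
        · rw [if_pos (by omega), htop (i - s) (by omega), map_zero, mul_zero,
            hP i (by omega), sub_zero]
      obtain ⟨C, ρ, heq, hρ⟩ := ih (P - X) h1
      refine ⟨C + Finsupp.single s c, ρ, ?_, hρ⟩
      rw [skewMul_add_left, ← hX]
      have : P = (P - X) + X := by abel
      rw [this, heq]
      abel

end WBAux

/-- Correctness of the Welch–Berlekamp key equations: let `B = {b₁,…,b_n}` be a P-basis
of a P-closed set `Ω` of rank `n`, `1 ≤ k ≤ n`, `t = ⌊(n−k)/2⌋`.  Suppose
`deg F < k`, `deg R < n` and the skew weight `wt_Ω(R − F) = n − Rk(Z(R−F) ∩ Ω)` is at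
most `t`.  If `deg L ≤ t`, `deg Q ≤ t + k − 1` and `(L·R)(bᵢ) = Q(bᵢ)` for all `i`
(meaning `Q(bᵢ) = 0` when `rᵢ = R(bᵢ) = 0`, and `L(bᵢ^{rᵢ})·rᵢ = Q(bᵢ)` when `rᵢ ≠ 0`),
then `Q = L·F` in `K[x;σ]`. -/
theorem welch_berlekamp_key_equation {K : Type*} [Field K] [Fintype K] (σ : K ≃+* K)
    (Ω : Set K) (FΩ : ℕ →₀ K) (hFΩ : IsMinSkewPoly σ Ω FΩ)
    (hclosed : Ω = {a | skewEval σ FΩ a = 0})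
    (n k : ℕ) (hn : skewDeg FΩ = n) (hk1 : 1 ≤ k) (hkn : k ≤ n)
    (B : Fin n → K) (hBinj : Function.Injective B) (hBmem : ∀ i, B i ∈ Ω)
    (hBindep : PIndep σ (Set.range B))
    (FB : ℕ →₀ K) (hFB : IsMinSkewPoly σ (Set.range B) FB)
    (hBgen : {a | skewEval σ FB a = 0} = Ω)
    (F R : ℕ →₀ K) (hdegF : ∀ i, k ≤ i → F i = 0) (hdegR : ∀ i, n ≤ i → R i = 0)
    (hwt : ∃ FZ : ℕ →₀ K,
      IsMinSkewPoly σ {a | a ∈ Ω ∧ skewEval σ (R - F) a = 0} FZ ∧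
        n - skewDeg FZ ≤ (n - k) / 2)
    (L Q : ℕ →₀ K)
    (hdegL : ∀ i, (n - k) / 2 < i → L i = 0)
    (hdegQ : ∀ i, (n - k) / 2 + k - 1 < i → Q i = 0)
    (hkey : ∀ i : Fin n,
      (skewEval σ R (B i) = 0 → skewEval σ Q (B i) = 0) ∧
      (skewEval σ R (B i) ≠ 0 →
        skewEval σ L (σ (skewEval σ R (B i)) * (skewEval σ R (B i))⁻¹ * B i) *
            skewEval σ R (B i) = skewEval σ Q (B i))) :
    Q = skewMul σ L F := by
  classical
  obtain ⟨FZ, hFZ, hd⟩ := hwt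
  obtain ⟨hFZne, hFZmonic, hFZvan, hFZmin⟩ := hFZ
  obtain ⟨hFBne, hFBmonic, hFBvan, hFBmin⟩ := hFB
  set t := (n - k) / 2 with ht
  set Θ : ℕ →₀ K := skewMul σ L R - Q with hΘdef
  have hΘB : ∀ i : Fin n, skewEval σ Θ (B i) = 0 := by
    intro i
    rw [hΘdef, skewEval_sub]
    by_cases hr : skewEval σ R (B i) = 0
    · rw [skewEval_skewMul_zero σ L R (B i) hr, (hkey i).1 hr, sub_zero]
    · rw [skewEval_skewMul_ne_zero σ L R (B i) hr, (hkey i).2 hr, sub_self]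
  obtain ⟨C, ρ, hCeq, hρ⟩ := skew_div σ FB (skewDeg FB) hFBmonic
      (fun j hj => apply_eq_zero_of_skewDeg_lt FB j hj) (skewDeg Θ + 1) Θ
      (fun i hi => apply_eq_zero_of_skewDeg_lt Θ i (by omega))
  have hρ0 : ρ = 0 := by
    by_contra hne
    have hρB : ∀ b ∈ Set.range B, skewEval σ ρ b = 0 := by
      rintro b ⟨i, rfl⟩
      have h2 := hΘB i
      rw [hCeq, skewEval_add,
        skewEval_skewMul_zero σ C FB (B i) (hFBvan (B i) ⟨i, rfl⟩), zero_add] at h2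
      exact h2
    have h3 := hFBmin ρ hne hρB
    have h4 := skewDeg_lt_of ρ (skewDeg FB) hne hρ
    omega
  have hΘΩ : ∀ a ∈ Ω, skewEval σ Θ a = 0 := by
    intro a ha
    have hFBa : skewEval σ FB a = 0 := by rw [← hBgen] at ha; exact ha
    rw [hCeq, hρ0, add_zero, skewEval_skewMul_zero σ C FB a hFBa]
  set ψ : ℕ →₀ K := skewMul σ L F - Q with hψdef
  by_cases hψ0 : ψ = 0
  · rw [hψdef] at hψ0
    exact (sub_eq_zero.mp hψ0).symm
  · exfalso
    have hψvan : ∀ a ∈ {a | a ∈ Ω ∧ skewEval σ (R - F) a = 0}, skewEval σ ψ a = 0 := by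
      rintro a ⟨haΩ, haz⟩
      rw [skewEval_sub, sub_eq_zero] at haz
      have h1 : skewEval σ (skewMul σ L F) a = skewEval σ (skewMul σ L R) a := by
        rw [skewEval_skewMul, skewEval_skewMul, haz]
      have h2 := hΘΩ a haΩ
      rw [hΘdef, skewEval_sub, sub_eq_zero] at h2
      rw [hψdef, skewEval_sub, h1, h2, sub_self]
    have hmin := hFZmin ψ hψ0 hψvan
    have hψdeg : ∀ i, t + k ≤ i → ψ i = 0 := by
      intro i hi
      have hQ : Q i = 0 := hdegQ i (by omega)
      have hLF : (skewMul σ L F) i = 0 := by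
        refine skewMul_apply_eq_zero σ L F i fun p q hpq => ?_
        by_cases hp : t < p
        · rw [hdegL p hp, zero_mul]
        · rw [hdegF q (by omega), map_zero, mul_zero]
      rw [hψdef, Finsupp.sub_apply, hQ, hLF, sub_zero]
    have h1 : skewDeg ψ < t + k := skewDeg_lt_of ψ (t + k) hψ0 hψdeg
    omega
end
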